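/- Let (X,Y): [0,1] → R² be a centred Gaussian process and f(u,v) = E[(X_u − Y_u) X_v]. Suppose the ρ-variation of the covariance R_{(X,Y)} of the joint process is controlled by a 2D control ω, ρ ≥ 1, and let γ > ρ. Then for s < t and any rectangle [σ,τ]×[σ',τ'] ⊂ [s,t]², one has V_γ(f, [σ,τ]×[σ',τ']) ≤ ε · ω([s,t]²)^{(1/ρ − 1/γ)/2} · ω([σ,τ]×[σ',τ'])^{1/γ}, where ε² = V_∞(R_{X−Y}, [s,t]²)^{1−ρ/γ}. -/

import Mathlib

open Set MeasureTheory ProbabilityTheory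
open scoped ENNReal NNReal

noncomputable section

/-- Rectangular increment of `f : ℝ → ℝ → ℝ` over the rectangle `[a,b] × [c,d]`. -/
def inc2 (f : ℝ → ℝ → ℝ) (a b c d : ℝ) : ℝ := f b d - f b c - f a d + f a c

/-- A grid (partition) of the interval `[s,t]`. -/
structure Grid (s t : ℝ) where
  n : ℕ
  pts : Fin (n + 1) → ℝ
  mono : Monotone pts
  first : pts 0 = s
  last : pts (Fin.last n) = t

/-- 2D `p`-variation of `f` over `[s,t] × [u,v]`, as the supremum over grid partitions of
`(Σ_{i,j} |f(increment over grid rectangle)|^p)^{1/p}` (valued in `ℝ≥0∞`). -/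
def V2 (p : ℝ) (f : ℝ → ℝ → ℝ) (s t u v : ℝ) : ℝ≥0∞ :=
  ⨆ (D : Grid s t) (E : Grid u v),
    (∑ i : Fin D.n, ∑ j : Fin E.n,
      (ENNReal.ofReal
        |inc2 f (D.pts i.castSucc) (D.pts i.succ) (E.pts j.castSucc) (E.pts j.succ)|) ^ p)
      ^ (1 / p)

/-- `V_∞`: the supremum of absolute rectangular increments over sub-rectangles of
`[s,t] × [u,v]`. -/
def Vinf (f : ℝ → ℝ → ℝ) (s t u v : ℝ) : ℝ≥0∞ :=
  ⨆ (a ∈ Icc s t) (b ∈ Icc s t) (c ∈ Icc u v) (e ∈ Icc u v) (_ : a ≤ b) (_ : c ≤ e),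
    ENNReal.ofReal |inc2 f a b c e|

/-- A rectangle `[a,b] × [c,d]` is coded by the 4-tuple `(a,b,c,d)`. -/
abbrev Rect : Type := ℝ × ℝ × ℝ × ℝ

def Rect.set (r : Rect) : Set (ℝ × ℝ) := Icc r.1 r.2.1 ×ˢ Icc r.2.2.1 r.2.2.2

def Rect.proper (r : Rect) : Prop := r.1 ≤ r.2.1 ∧ r.2.2.1 ≤ r.2.2.2

def Rect.inc (f : ℝ → ℝ → ℝ) (r : Rect) : ℝ := inc2 f r.1 r.2.1 r.2.2.1 r.2.2.2

/-- `Π` is a partition of the rectangle `R` into finitely many essentially disjoint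
rectangles. -/
def IsRectPartition (prt : Finset Rect) (R : Rect) : Prop :=
  (∀ r ∈ prt, Rect.proper r) ∧ (⋃ r ∈ prt, Rect.set r) = Rect.set R ∧
    ∀ r ∈ prt, ∀ r' ∈ prt, r ≠ r' → interior (Rect.set r ∩ Rect.set r') = ∅

/-- A 2D control: continuous, nonnegative, vanishing on degenerate rectangles and
superadditive under partitions of rectangles in `[0,1]²` into essentially disjoint
rectangles. -/
def IsControl2 (ω : ℝ → ℝ → ℝ → ℝ → ℝ) : Prop :=
  Continuous (fun q : ℝ × ℝ × ℝ × ℝ => ω q.1 q.2.1 q.2.2.1 q.2.2.2) ∧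
  (∀ a b c d, 0 ≤ ω a b c d) ∧
  (∀ a c d, ω a a c d = 0) ∧ (∀ a b c, ω a b c c = 0) ∧
  (∀ R : Rect, Rect.proper R → Rect.set R ⊆ Icc (0:ℝ) 1 ×ˢ Icc (0:ℝ) 1 →
    ∀ prt : Finset Rect, IsRectPartition prt R →
      (∑ r ∈ prt, ω r.1 r.2.1 r.2.2.1 r.2.2.2) ≤ ω R.1 R.2.1 R.2.2.1 R.2.2.2)

/-- Controlled `p`-variation of `f` over the rectangle `R`: the supremum over all partitions
of `R` into essentially disjoint rectangles of `(Σ_{A∈Π} |f(A)|^p)^{1/p}`. -/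
def ctrlVar (p : ℝ) (f : ℝ → ℝ → ℝ) (R : Rect) : ℝ≥0∞ :=
  ⨆ (prt : Finset Rect) (_ : IsRectPartition prt R),
    (∑ r ∈ prt, (ENNReal.ofReal |Rect.inc f r|) ^ p) ^ (1 / p)

namespace Grid

variable {s t : ℝ} (D : Grid s t)

lemma pts_mem_Icc (k : Fin (D.n + 1)) : D.pts k ∈ Icc s t := by
  constructor
  · conv_lhs => rw [← D.first]
    exact D.mono (Fin.zero_le k)
  · conv_rhs => rw [← D.last]
    exact D.mono (Fin.le_last k)

lemma cover (hst : s < t) {x : ℝ} (hx : x ∈ Icc s t) :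
    ∃ i : Fin D.n, D.pts i.castSucc ≤ x ∧ x ≤ D.pts i.succ ∧
      D.pts i.castSucc < D.pts i.succ := by
  classical
  have hn : 0 < D.n := by
    by_contra h
    push_neg at h
    have h0 : (0 : Fin (D.n + 1)) = Fin.last D.n := Fin.ext (by omega)
    have : s = t := by rw [← D.first, h0]; exact D.last
    linarith
  set T : Finset (Fin (D.n + 1)) := Finset.univ.filter (fun k => D.pts k ≤ x) with hT
  have h0T : (0 : Fin (D.n + 1)) ∈ T := by simp [hT, D.first, hx.1]
  have hTne : T.Nonempty := ⟨0, h0T⟩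
  set k := T.max' hTne with hk
  have hkx : D.pts k ≤ x := by
    have := T.max'_mem hTne
    simpa [hT] using this
  by_cases hkn : (k : ℕ) < D.n
  · set i : Fin D.n := ⟨(k : ℕ), hkn⟩ with hi
    have hic : i.castSucc = k := Fin.ext rfl
    have hlt : x < D.pts i.succ := by
      by_contra hle
      push_neg at hle
      have hmem : i.succ ∈ T := by
        simp only [hT, Finset.mem_filter, Finset.mem_univ, true_and]; exact hle
      have hle2 := T.le_max' _ hmem
      rw [← hk] at hle2
      have : (k : ℕ) + 1 ≤ (k : ℕ) := by
          have h := Fin.le_def.mp hle2; simp only [Fin.val_succ] at h; exact h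
      omega
    refine ⟨i, ?_, le_of_lt hlt, ?_⟩
    · rw [hic]; exact hkx
    · rw [hic]; exact lt_of_le_of_lt hkx hlt
  · have hkl : k = Fin.last D.n := Fin.ext (by simp only [Fin.val_last]; have := k.isLt; omega)
    have hxt : x = t := le_antisymm hx.2 (by rw [← D.last, ← hkl]; exact hkx)
    set U : Finset (Fin (D.n + 1)) := Finset.univ.filter (fun k => t ≤ D.pts k) with hU
    have hlastU : Fin.last D.n ∈ U := by simp [hU, D.last]
    have hUne : U.Nonempty := ⟨_, hlastU⟩
    set m := U.min' hUne with hm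
    have hmt : t ≤ D.pts m := by
      have := U.min'_mem hUne
      simpa [hU] using this
    have hm0 : 0 < (m : ℕ) := by
      rcases Nat.eq_zero_or_pos (m : ℕ) with h | h
      · exfalso
        have hm' : m = 0 := Fin.ext (by simp only [Fin.val_zero]; omega)
        rw [hm', D.first] at hmt
        linarith
      · exact h
    have hmn : (m : ℕ) - 1 < D.n := by have := m.isLt; omega
    set i : Fin D.n := ⟨(m : ℕ) - 1, hmn⟩ with hi
    have hsucc : i.succ = m := Fin.ext (by simp only [hi, Fin.val_succ]; omega)
    have hcs : D.pts i.castSucc < t := by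
      by_contra hge
      push_neg at hge
      have hmemU : i.castSucc ∈ U := by
        simp only [hU, Finset.mem_filter, Finset.mem_univ, true_and]; exact hge
      have hle2 := U.min'_le _ hmemU
      rw [← hm] at hle2
      have : (m : ℕ) ≤ (m : ℕ) - 1 := by simpa [Fin.le_def, hi] using hle2
      omega
    refine ⟨i, by rw [hxt]; exact le_of_lt hcs, by rw [hsucc, hxt]; exact hmt,
      by rw [hsucc]; exact lt_of_lt_of_le hcs hmt⟩

lemma cell_inj {i i' : Fin D.n}
    (h1 : D.pts i.castSucc = D.pts i'.castSucc) (h2 : D.pts i.succ = D.pts i'.succ)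
    (hlt : D.pts i.castSucc < D.pts i.succ) : i = i' := by
  by_contra hne
  rcases lt_or_gt_of_ne hne with h | h
  · have hle : D.pts i.succ ≤ D.pts i'.castSucc := by
      apply D.mono
      simp only [Fin.le_def, Fin.val_succ, Fin.coe_castSucc]
      exact h
    rw [← h1] at hle
    linarith
  · have hle : D.pts i'.succ ≤ D.pts i.castSucc := by
      apply D.mono
      simp only [Fin.le_def, Fin.val_succ, Fin.coe_castSucc]
      exact h
    rw [← h2] at hle
    linarith

lemma Ioo_disjoint {i i' : Fin D.n} (h : i ≠ i') :
    Ioo (D.pts i.castSucc) (D.pts i.succ) ∩ Ioo (D.pts i'.castSucc) (D.pts i'.succ) = ∅ := by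
  rcases lt_or_gt_of_ne h with h | h
  · have hle : D.pts i.succ ≤ D.pts i'.castSucc := by
      apply D.mono
      simp only [Fin.le_def, Fin.val_succ, Fin.coe_castSucc]
      exact h
    ext z
    simp only [mem_inter_iff, mem_Ioo, mem_empty_iff_false, iff_false, not_and]
    intro h1 h2 h3
    linarith
  · have hle : D.pts i'.succ ≤ D.pts i.castSucc := by
      apply D.mono
      simp only [Fin.le_def, Fin.val_succ, Fin.coe_castSucc]
      exact h
    ext z
    simp only [mem_inter_iff, mem_Ioo, mem_empty_iff_false, iff_false, not_and]
    intro h1 h2 h3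
    linarith

end Grid

lemma sum_cells_le {ω : ℝ → ℝ → ℝ → ℝ → ℝ} (hω : IsControl2 ω) {σ τ σ' τ' : ℝ}
    (h0 : 0 ≤ σ) (hτ1 : τ ≤ 1) (h0' : 0 ≤ σ') (hτ1' : τ' ≤ 1)
    (hστ : σ < τ) (hστ' : σ' < τ') (D : Grid σ τ) (E : Grid σ' τ') :
    ∑ i : Fin D.n, ∑ j : Fin E.n,
      ω (D.pts i.castSucc) (D.pts i.succ) (E.pts j.castSucc) (E.pts j.succ)
      ≤ ω σ τ σ' τ' := by
  classical
  obtain ⟨-, hnn, hdeg1, hdeg2, hsup⟩ := hω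
  set cell : Fin D.n × Fin E.n → Rect :=
    fun p => (D.pts p.1.castSucc, D.pts p.1.succ, E.pts p.2.castSucc, E.pts p.2.succ)
    with hcell
  set g : Fin D.n × Fin E.n → ℝ :=
    fun p => ω (D.pts p.1.castSucc) (D.pts p.1.succ) (E.pts p.2.castSucc) (E.pts p.2.succ)
    with hg
  set S : Finset (Fin D.n × Fin E.n) := Finset.univ.filter
    (fun p => D.pts p.1.castSucc < D.pts p.1.succ ∧ E.pts p.2.castSucc < E.pts p.2.succ)
    with hS
  have hsum1 : ∑ i : Fin D.n, ∑ j : Fin E.n,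
      ω (D.pts i.castSucc) (D.pts i.succ) (E.pts j.castSucc) (E.pts j.succ)
      = ∑ p : Fin D.n × Fin E.n, g p := by
    rw [← Finset.sum_product']
    rw [Finset.univ_product_univ]
  have hsum2 : ∑ p : Fin D.n × Fin E.n, g p = ∑ p ∈ S, g p := by
    symm
    apply Finset.sum_subset (Finset.subset_univ S)
    intro p _ hpS
    simp only [hS, Finset.mem_filter, Finset.mem_univ, true_and, not_and_or, not_lt] at hpS
    rcases hpS with h | h
    · have he : D.pts p.1.succ = D.pts p.1.castSucc :=
        le_antisymm h (D.mono (by simp [Fin.le_def]))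
      simp only [hg]
      rw [he]
      exact hdeg1 _ _ _
    · have he : E.pts p.2.succ = E.pts p.2.castSucc :=
        le_antisymm h (E.mono (by simp [Fin.le_def]))
      simp only [hg]
      rw [he]
      exact hdeg2 _ _ _
  have hinj : ∀ p ∈ S, ∀ p' ∈ S, cell p = cell p' → p = p' := by
    intro p hp p' hp' hc
    simp only [hS, Finset.mem_filter, Finset.mem_univ, true_and] at hp hp'
    simp only [hcell, Prod.mk.injEq] at hc
    obtain ⟨e1, e2, e3, e4⟩ := hc
    have h1 : p.1 = p'.1 := D.cell_inj e1 e2 hp.1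
    have h2 : p.2 = p'.2 := E.cell_inj e3 e4 hp.2
    exact Prod.ext h1 h2
  set prt : Finset Rect := S.image cell with hprt
  have hpart : IsRectPartition prt (σ, τ, σ', τ') := by
    refine ⟨?_, ?_, ?_⟩
    · rintro r hr
      obtain ⟨p, -, rfl⟩ := Finset.mem_image.mp hr
      exact ⟨D.mono (by simp [Fin.le_def]), E.mono (by simp [Fin.le_def])⟩
    · apply Set.Subset.antisymm
      · refine Set.iUnion₂_subset ?_
        rintro r hr
        obtain ⟨p, -, rfl⟩ := Finset.mem_image.mp hr
        intro z hz
        simp only [Rect.set, hcell, Set.mem_prod, mem_Icc] at hz ⊢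
        have i1 := (D.pts_mem_Icc p.1.castSucc).1
        have i2 := (D.pts_mem_Icc p.1.succ).2
        have i3 := (E.pts_mem_Icc p.2.castSucc).1
        have i4 := (E.pts_mem_Icc p.2.succ).2
        exact ⟨⟨le_trans i1 hz.1.1, le_trans hz.1.2 i2⟩,
          ⟨le_trans i3 hz.2.1, le_trans hz.2.2 i4⟩⟩
      · intro z hz
        simp only [Rect.set, Set.mem_prod] at hz
        obtain ⟨i, hi1, hi2, hi3⟩ := D.cover hστ hz.1
        obtain ⟨j, hj1, hj2, hj3⟩ := E.cover hστ' hz.2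
        have hmem : (i, j) ∈ S := by
          simp only [hS, Finset.mem_filter, Finset.mem_univ, true_and]
          exact ⟨hi3, hj3⟩
        refine Set.mem_biUnion (Finset.mem_image_of_mem cell hmem) ?_
        simp only [Rect.set, hcell, Set.mem_prod, mem_Icc]
        exact ⟨⟨hi1, hi2⟩, ⟨hj1, hj2⟩⟩
    · intro r hr r' hr' hne
      obtain ⟨p, hpS, rfl⟩ := Finset.mem_image.mp hr
      obtain ⟨p', hp'S, rfl⟩ := Finset.mem_image.mp hr'
      have hpp : p ≠ p' := fun h => hne (by rw [h])
      rw [Set.eq_empty_iff_forall_notMem]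
      intro z hz
      have hsub : interior (Rect.set (cell p) ∩ Rect.set (cell p'))
          ⊆ interior (Rect.set (cell p)) ∩ interior (Rect.set (cell p')) := by
        rw [interior_inter]
      have hz' := hsub hz
      simp only [Rect.set, hcell, interior_prod_eq, interior_Icc, Set.mem_inter_iff,
        Set.mem_prod] at hz'
      have hcases : p.1 ≠ p'.1 ∨ p.2 ≠ p'.2 := by
        by_contra hcon
        push_neg at hcon
        exact hpp (Prod.ext hcon.1 hcon.2)
      rcases hcases with h | h
      · have hd := D.Ioo_disjoint h
        have hz1 : z.1 ∈ Ioo (D.pts p.1.castSucc) (D.pts p.1.succ) ∩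
            Ioo (D.pts p'.1.castSucc) (D.pts p'.1.succ) := ⟨hz'.1.1, hz'.2.1⟩
        rw [hd] at hz1
        exact hz1
      · have hd := E.Ioo_disjoint h
        have hz2 : z.2 ∈ Ioo (E.pts p.2.castSucc) (E.pts p.2.succ) ∩
            Ioo (E.pts p'.2.castSucc) (E.pts p'.2.succ) := ⟨hz'.1.2, hz'.2.2⟩
        rw [hd] at hz2
        exact hz2
  have hsum3 : ∑ p ∈ S, g p = ∑ r ∈ prt, ω r.1 r.2.1 r.2.2.1 r.2.2.2 := by
    rw [hprt, Finset.sum_image hinj]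
  have hfinal := hsup (σ, τ, σ', τ') ⟨le_of_lt hστ, le_of_lt hστ'⟩
    (by
      intro z hz
      simp only [Rect.set, Set.mem_prod, mem_Icc] at hz ⊢
      exact ⟨⟨le_trans h0 hz.1.1, le_trans hz.1.2 hτ1⟩,
        ⟨le_trans h0' hz.2.1, le_trans hz.2.2 hτ1'⟩⟩)
    prt hpart
  rw [hsum1, hsum2, hsum3]
  exact hfinal

/-- The 4-point grid `s ≤ a ≤ b ≤ t`. -/
def grid4 {s t : ℝ} (a b : ℝ) (hsa : s ≤ a) (hab : a ≤ b) (hbt : b ≤ t) : Grid s t where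
  n := 3
  pts := ![s, a, b, t]
  mono := by
    rw [Fin.monotone_iff_le_succ]
    intro i
    fin_cases i <;> simp [Fin.succ] <;> assumption
  first := rfl
  last := rfl

lemma omega_mono {ω : ℝ → ℝ → ℝ → ℝ → ℝ} (hω : IsControl2 ω) {s t a b c e : ℝ}
    (hs : 0 ≤ s) (ht : t ≤ 1) (hst : s < t)
    (ha : s ≤ a) (hab : a ≤ b) (hb : b ≤ t)
    (hc : s ≤ c) (hce : c ≤ e) (he : e ≤ t) :
    ω a b c e ≤ ω s t s t := by
  rcases eq_or_lt_of_le hab with rfl | hab'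
  · rw [hω.2.2.1]
    exact hω.2.1 s t s t
  rcases eq_or_lt_of_le hce with rfl | hce'
  · rw [hω.2.2.2.1]
    exact hω.2.1 s t s t
  set G1 := grid4 a b ha (le_of_lt hab') hb with hG1
  set G2 := grid4 c e hc (le_of_lt hce') he with hG2
  have key := sum_cells_le hω hs ht hs ht hst hst G1 G2
  refine le_trans ?_ key
  have heq : ω a b c e = ω (G1.pts (1 : Fin 3).castSucc) (G1.pts (1 : Fin 3).succ)
      (G2.pts (1 : Fin 3).castSucc) (G2.pts (1 : Fin 3).succ) := rfl
  rw [heq]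
  have step1 : ω (G1.pts (1 : Fin 3).castSucc) (G1.pts (1 : Fin 3).succ)
      (G2.pts (1 : Fin 3).castSucc) (G2.pts (1 : Fin 3).succ)
      ≤ ∑ j : Fin 3, ω (G1.pts (1 : Fin 3).castSucc) (G1.pts (1 : Fin 3).succ)
        (G2.pts j.castSucc) (G2.pts j.succ) :=
    Finset.single_le_sum
      (f := fun j : Fin 3 => ω (G1.pts (1 : Fin 3).castSucc) (G1.pts (1 : Fin 3).succ)
        (G2.pts j.castSucc) (G2.pts j.succ))
      (fun j _ => hω.2.1 _ _ _ _) (Finset.mem_univ (1 : Fin 3))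
  refine le_trans step1 ?_
  exact Finset.single_le_sum
    (f := fun i : Fin 3 => ∑ j : Fin 3, ω (G1.pts i.castSucc) (G1.pts i.succ)
      (G2.pts j.castSucc) (G2.pts j.succ))
    (fun i _ => Finset.sum_nonneg fun j _ => hω.2.1 _ _ _ _) (Finset.mem_univ (1 : Fin 3))

section Analysis

variable {Ω : Type*} [MeasurableSpace Ω] {P : Measure Ω}

lemma memLp2_of_gaussian [IsProbabilityMeasure P]
    {f : Ω → ℝ} (hm : Measurable f) {v : ℝ≥0} (h : Measure.map f P = gaussianReal 0 v) :
    MemLp f 2 P := by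
  have hid : MemLp (id : ℝ → ℝ) 2 (gaussianReal 0 v) := by
    by_cases hv : v = 0
    · subst hv
      rw [gaussianReal_zero_var]
      have hae : (id : ℝ → ℝ) =ᵐ[Measure.dirac (0 : ℝ)] (fun _ => (0 : ℝ)) := by
        rw [Filter.EventuallyEq, ae_dirac_iff (by measurability)]
        rfl
      exact (memLp_congr_ae hae).mpr (memLp_const 0)
    · rw [gaussianReal_of_var_ne_zero _ hv]
      rw [memLp_two_iff_integrable_sq aestronglyMeasurable_id]
      rw [integrable_withDensity_iff (measurable_gaussianPDF _ _)
        (ae_of_all _ fun x => ENNReal.ofReal_lt_top)]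
      have hvpos : (0 : ℝ) < (v : ℝ) := by
        have hv' : 0 < v := pos_iff_ne_zero.mpr hv
        exact_mod_cast hv'
      have hb : (0 : ℝ) < (2 * (v : ℝ))⁻¹ := by positivity
      have key : Integrable
          (fun x : ℝ => (√(2 * Real.pi * (v : ℝ)))⁻¹ *
            (x ^ (2 : ℕ) * Real.exp (-(2 * (v : ℝ))⁻¹ * x ^ 2))) := by
        refine Integrable.const_mul ?_ _
        have := integrable_rpow_mul_exp_neg_mul_sq hb (s := 2) (by norm_num)
        simpa [Real.rpow_natCast] using
          (by
            have h2 : ((2 : ℕ) : ℝ) = (2 : ℝ) := by norm_num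
            simpa [h2] using this)
      refine key.congr (ae_of_all _ fun x => ?_)
      have hpdf : (gaussianPDF 0 v x).toReal = gaussianPDFReal 0 v x := by
        rw [gaussianPDF]
        exact ENNReal.toReal_ofReal (gaussianPDFReal_nonneg _ _ _)
      have harg : -(x - 0) ^ 2 / (2 * (v : ℝ)) = -(2 * (v : ℝ))⁻¹ * x ^ 2 := by
        field_simp
        ring
      simp only [id_eq]
      rw [hpdf]
      simp only [gaussianPDFReal]
      rw [harg]
      ring
  have hcomp := (memLp_map_measure_iff aestronglyMeasurable_id hm.aemeasurable).mp
    (by rw [h]; exact hid)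
  simpa using hcomp

lemma integrable_mul2 {f g : Ω → ℝ} (hf : MemLp f 2 P) (hg : MemLp g 2 P) :
    Integrable (fun x => f x * g x) P := by
  refine Integrable.mono' ((hf.integrable_sq.add hg.integrable_sq).div_const 2)
    (hf.1.mul hg.1) (ae_of_all _ fun x => ?_)
  simp only [Pi.add_apply]
  rw [Real.norm_eq_abs, abs_mul]
  nlinarith [sq_nonneg (|f x| - |g x|), sq_abs (f x), sq_abs (g x),
    abs_nonneg (f x), abs_nonneg (g x)]

lemma cauchy_schwarz {f g : Ω → ℝ} (hf : MemLp f 2 P) (hg : MemLp g 2 P) :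
    |∫ x, f x * g x ∂P| ≤ (∫ x, f x ^ 2 ∂P) ^ (1/2 : ℝ) * (∫ x, g x ^ 2 ∂P) ^ (1/2 : ℝ) := by
  have h2 : Real.HolderConjugate 2 2 := Real.HolderConjugate.two_two
  have habs : |∫ x, f x * g x ∂P| ≤ ∫ x, |f x| * |g x| ∂P := by
    have ha1 : |∫ x, f x * g x ∂P| ≤ ∫ x, ‖f x * g x‖ ∂P := by
      rw [← Real.norm_eq_abs]
      exact norm_integral_le_integral_norm _
    have ha2 : (∫ x, ‖f x * g x‖ ∂P) = ∫ x, |f x| * |g x| ∂P := by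
      simp_rw [Real.norm_eq_abs, abs_mul]
    rw [ha2] at ha1
    exact ha1
  have hof : (ENNReal.ofReal (2:ℝ)) = 2 := by norm_num
  have hfa : MemLp (fun x => |f x|) (ENNReal.ofReal (2:ℝ)) P := by
    rw [hof]; simpa [Real.norm_eq_abs] using hf.norm
  have hga : MemLp (fun x => |g x|) (ENNReal.ofReal (2:ℝ)) P := by
    rw [hof]; simpa [Real.norm_eq_abs] using hg.norm
  have hmain := integral_mul_le_Lp_mul_Lq_of_nonneg h2
    (ae_of_all _ fun x => abs_nonneg (f x)) (ae_of_all _ fun x => abs_nonneg (g x)) hfa hga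
  have hrw : ∀ h : Ω → ℝ, (∫ x, |h x| ^ (2:ℝ) ∂P) = ∫ x, h x ^ 2 ∂P := by
    intro h
    congr 1
    funext x
    rw [show (2:ℝ) = ((2:ℕ):ℝ) by norm_num, Real.rpow_natCast, sq_abs]
  rw [hrw f, hrw g] at hmain
  exact le_trans habs hmain

lemma integral_sub_mul_sub {f f' g g' : Ω → ℝ}
    (hf : MemLp f 2 P) (hf' : MemLp f' 2 P) (hg : MemLp g 2 P) (hg' : MemLp g' 2 P) :
    ∫ x, (f x - f' x) * (g x - g' x) ∂P
      = ∫ x, f x * g x ∂P - ∫ x, f x * g' x ∂P - ∫ x, f' x * g x ∂P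
        + ∫ x, f' x * g' x ∂P := by
  have h1 := integrable_mul2 hf hg
  have h2 := integrable_mul2 hf hg'
  have h3 := integrable_mul2 hf' hg
  have h4 := integrable_mul2 hf' hg'
  have heq : (fun x => (f x - f' x) * (g x - g' x))
      = fun x => f x * g x - f x * g' x - f' x * g x + f' x * g' x := by
    funext x; ring
  have h12 : Integrable (fun x => f x * g x - f x * g' x) P := by exact h1.sub h2
  have h123 : Integrable (fun x => f x * g x - f x * g' x - f' x * g x) P := by
    exact h12.sub h3
  rw [heq, integral_add h123 h4, integral_sub h12 h3, integral_sub h1 h2]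

end Analysis

lemma le_Vinf {g : ℝ → ℝ → ℝ} {s t u v a b c e : ℝ} (ha : a ∈ Icc s t) (hb : b ∈ Icc s t)
    (hc : c ∈ Icc u v) (he : e ∈ Icc u v) (hab : a ≤ b) (hce : c ≤ e) :
    ENNReal.ofReal |inc2 g a b c e| ≤ Vinf g s t u v :=
  le_iSup_of_le a <| le_iSup_of_le ha <| le_iSup_of_le b <| le_iSup_of_le hb <|
    le_iSup_of_le c <| le_iSup_of_le hc <| le_iSup_of_le e <| le_iSup_of_le he <|
      le_iSup_of_le hab <| le_iSup_of_le hce le_rfl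

lemma rpow_inv_le {x w ρ : ℝ} (hρ : 0 < ρ) (hx : 0 ≤ x) (h : x ^ ρ ≤ w) : x ≤ w ^ (1/ρ) := by
  have hxx : x = (x ^ ρ) ^ (1/ρ) := by
    rw [← Real.rpow_mul hx, mul_one_div_cancel (ne_of_gt hρ), Real.rpow_one]
  rw [hxx]
  exact Real.rpow_le_rpow (Real.rpow_nonneg hx _) h (by positivity)


/-- let `(X,Y)` be a centred Gaussian process in `ℝ²` whose joint covariance
has `ρ`-variation controlled by a 2D control `ω`, `ρ ≥ 1`, `γ > ρ`, and let
`f(u,v) = E[(X_u − Y_u) X_v]`. Then for `s < t` and any rectangle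
`[σ,τ]×[σ',τ'] ⊆ [s,t]²`:
`V_γ(f,[σ,τ]×[σ',τ']) ≤ ε · ω([s,t]²)^{(1/ρ−1/γ)/2} · ω([σ,τ]×[σ',τ'])^{1/γ}`
where `ε² = V_∞(R_{X−Y},[s,t]²)^{1−ρ/γ}`. -/
theorem half_estimate_gaussian
    {Ω : Type*} [MeasurableSpace Ω] (P : Measure Ω) [IsProbabilityMeasure P]
    (X Y : ℝ → Ω → ℝ)
    (hXm : ∀ u, Measurable (X u)) (hYm : ∀ u, Measurable (Y u))
    -- `(X,Y)` is a centred Gaussian process: all finite linear combinations of values of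
    -- `X` and `Y` at times in `[0,1]` are centred Gaussians
    (hgauss : ∀ (m : ℕ) (idx : Fin m → Bool × ℝ) (c : Fin m → ℝ),
      (∀ i, (idx i).2 ∈ Icc (0:ℝ) 1) →
      ∃ v : ℝ≥0,
        Measure.map
          (fun ω' => ∑ i, c i * (if (idx i).1 then X (idx i).2 ω' else Y (idx i).2 ω')) P
          = gaussianReal 0 v)
    (ρ γ : ℝ) (hρ : 1 ≤ ρ) (hργ : ρ < γ)
    (ω : ℝ → ℝ → ℝ → ℝ → ℝ) (hω : IsControl2 ω)
    -- the `ρ`-variation of the joint covariance `R_{(X,Y)}` is controlled by `ω`: all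
    -- rectangular covariance increments of pairs from `{X, Y, X−Y}` are dominated
    (hcov : ∀ Z W : ℝ → Ω → ℝ,
      (Z = X ∨ Z = Y ∨ Z = fun u ω' => X u ω' - Y u ω') →
      (W = X ∨ W = Y ∨ W = fun u ω' => X u ω' - Y u ω') →
      ∀ a b c d : ℝ, a ∈ Icc (0:ℝ) 1 → b ∈ Icc (0:ℝ) 1 → c ∈ Icc (0:ℝ) 1 →
        d ∈ Icc (0:ℝ) 1 → a ≤ b → c ≤ d →
        |∫ ω', (Z b ω' - Z a ω') * (W d ω' - W c ω') ∂P| ^ ρ ≤ ω a b c d)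
    (s t : ℝ) (hs : 0 ≤ s) (hst : s < t) (ht : t ≤ 1)
    (σ τ σ' τ' : ℝ) (h1 : σ ∈ Icc s t) (h2 : τ ∈ Icc s t) (h3 : σ' ∈ Icc s t)
    (h4 : τ' ∈ Icc s t) (hστ : σ ≤ τ) (hστ' : σ' ≤ τ') :
    V2 γ (fun u v => ∫ ω', (X u ω' - Y u ω') * X v ω' ∂P) σ τ σ' τ'
      ≤ (Vinf (fun u v => ∫ ω', (X u ω' - Y u ω') * (X v ω' - Y v ω') ∂P) s t s t)
          ^ ((1 - ρ / γ) / 2)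
        * ENNReal.ofReal ((ω s t s t) ^ ((1 / ρ - 1 / γ) / 2))
        * ENNReal.ofReal ((ω σ τ σ' τ') ^ (1 / γ)) := by
  classical
  have hρ0 : (0:ℝ) < ρ := lt_of_lt_of_le one_pos hρ
  have hγ0 : (0:ℝ) < γ := lt_trans hρ0 hργ
  have hγρ : (0:ℝ) ≤ γ - ρ := by linarith
  have hγne : γ ≠ 0 := ne_of_gt hγ0
  have hρne : ρ ≠ 0 := ne_of_gt hρ0
  set Z : ℝ → Ω → ℝ := fun u ω' => X u ω' - Y u ω' with hZ
  set f : ℝ → ℝ → ℝ := fun u v => ∫ ω', (X u ω' - Y u ω') * X v ω' ∂P with hf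
  set gc : ℝ → ℝ → ℝ := fun u v => ∫ ω', (X u ω' - Y u ω') * (X v ω' - Y v ω') ∂P with hgc
  have hIst : Icc σ τ ⊆ Icc s t := Icc_subset_Icc h1.1 h2.2
  have hIst' : Icc σ' τ' ⊆ Icc s t := Icc_subset_Icc h3.1 h4.2
  have hI01 : Icc s t ⊆ Icc (0:ℝ) 1 := Icc_subset_Icc hs ht
  -- L² membership
  have hXL : ∀ u, u ∈ Icc (0:ℝ) 1 → MemLp (X u) 2 P := by
    intro u hu
    obtain ⟨v, hv⟩ := hgauss 1 (fun _ => (true, u)) (fun _ => 1) (fun _ => hu)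
    simp only [Fin.sum_univ_one, one_mul, if_true] at hv
    exact memLp2_of_gaussian (hXm u) hv
  have hYL : ∀ u, u ∈ Icc (0:ℝ) 1 → MemLp (Y u) 2 P := by
    intro u hu
    obtain ⟨v, hv⟩ := hgauss 1 (fun _ => (false, u)) (fun _ => 1) (fun _ => hu)
    simp only [Fin.sum_univ_one, one_mul, Bool.false_eq_true, if_false] at hv
    exact memLp2_of_gaussian (hYm u) hv
  have hZL : ∀ u, u ∈ Icc (0:ℝ) 1 → MemLp (Z u) 2 P := by
    intro u hu
    exact (hXL u hu).sub (hYL u hu)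
  -- increment identities
  have hinc_f : ∀ a b c d : ℝ, a ∈ Icc (0:ℝ) 1 → b ∈ Icc (0:ℝ) 1 → c ∈ Icc (0:ℝ) 1 →
      d ∈ Icc (0:ℝ) 1 →
      inc2 f a b c d = ∫ ω', (Z b ω' - Z a ω') * (X d ω' - X c ω') ∂P := by
    intro a b c d ha hb hc hd
    rw [integral_sub_mul_sub (hZL b hb) (hZL a ha) (hXL d hd) (hXL c hc)]
    simp only [inc2, hf, hZ]
  have hinc_gc : ∀ a b c e : ℝ, a ∈ Icc (0:ℝ) 1 → b ∈ Icc (0:ℝ) 1 → c ∈ Icc (0:ℝ) 1 →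
      e ∈ Icc (0:ℝ) 1 →
      inc2 gc a b c e = ∫ ω', (Z b ω' - Z a ω') * (Z e ω' - Z c ω') ∂P := by
    intro a b c e ha hb hc he
    rw [integral_sub_mul_sub (hZL b hb) (hZL a ha) (hZL e he) (hZL c hc)]
    simp only [inc2, hgc, hZ]
  -- the Vinf bound
  have hWst0 : 0 ≤ ω s t s t := hω.2.1 s t s t
  have hK : Vinf gc s t s t ≤ ENNReal.ofReal ((ω s t s t) ^ (1/ρ)) := by
    rw [Vinf]
    refine iSup_le fun a => iSup_le fun ha => iSup_le fun b => iSup_le fun hb =>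
      iSup_le fun c => iSup_le fun hc => iSup_le fun e => iSup_le fun he =>
      iSup_le fun hab => iSup_le fun hce => ?_
    apply ENNReal.ofReal_le_ofReal
    have hcv := hcov Z Z (Or.inr (Or.inr hZ)) (Or.inr (Or.inr hZ)) a b c e
      (hI01 ha) (hI01 hb) (hI01 hc) (hI01 he) hab hce
    rw [← hinc_gc a b c e (hI01 ha) (hI01 hb) (hI01 hc) (hI01 he)] at hcv
    have hmono : ω a b c e ≤ ω s t s t :=
      omega_mono hω hs ht hst ha.1 hab hb.2 hc.1 hce he.2
    exact rpow_inv_le hρ0 (abs_nonneg _) (le_trans hcv hmono)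
  set K := Vinf gc s t s t with hKdef
  have hKtop : K ≠ ⊤ := (lt_of_le_of_lt hK ENNReal.ofReal_lt_top).ne
  set M := K.toReal with hMdef
  have hM0 : 0 ≤ M := ENNReal.toReal_nonneg
  have hKM : K = ENNReal.ofReal M := (ENNReal.ofReal_toReal hKtop).symm
  have hMW0 : 0 ≤ M * (ω s t s t) ^ (1/ρ) := mul_nonneg hM0 (Real.rpow_nonneg hWst0 _)
  set C : ℝ := (M * (ω s t s t) ^ (1/ρ)) ^ ((γ - ρ)/2) with hC
  have hC0 : 0 ≤ C := Real.rpow_nonneg hMW0 _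
  -- the per-cell estimate
  have hcell : ∀ a b c d : ℝ, a ∈ Icc σ τ → b ∈ Icc σ τ → c ∈ Icc σ' τ' → d ∈ Icc σ' τ' →
      a ≤ b → c ≤ d → |inc2 f a b c d| ^ γ ≤ ω a b c d * C := by
    intro a b c d ha hb hc hd hab hcd
    have ha' : a ∈ Icc s t := hIst ha
    have hb' : b ∈ Icc s t := hIst hb
    have hc' : c ∈ Icc s t := hIst' hc
    have hd' : d ∈ Icc s t := hIst' hd
    have ha0 : a ∈ Icc (0:ℝ) 1 := hI01 ha'
    have hb0 : b ∈ Icc (0:ℝ) 1 := hI01 hb'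
    have hc0 : c ∈ Icc (0:ℝ) 1 := hI01 hc'
    have hd0 : d ∈ Icc (0:ℝ) 1 := hI01 hd'
    have hfi := hinc_f a b c d ha0 hb0 hc0 hd0
    have hρbound : |inc2 f a b c d| ^ ρ ≤ ω a b c d := by
      rw [hfi]
      exact hcov Z X (Or.inr (Or.inr hZ)) (Or.inl rfl) a b c d ha0 hb0 hc0 hd0 hab hcd
    have hG0 : 0 ≤ ∫ ω', (Z b ω' - Z a ω')^2 ∂P := integral_nonneg fun _ => sq_nonneg _
    have hH0 : 0 ≤ ∫ ω', (X d ω' - X c ω')^2 ∂P := integral_nonneg fun _ => sq_nonneg _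
    have hCS : |inc2 f a b c d| ≤ (∫ ω', (Z b ω' - Z a ω')^2 ∂P) ^ (1/2:ℝ)
        * (∫ ω', (X d ω' - X c ω')^2 ∂P) ^ (1/2:ℝ) := by
      rw [hfi]
      exact cauchy_schwarz ((hZL b hb0).sub (hZL a ha0)) ((hXL d hd0).sub (hXL c hc0))
    have hGval : inc2 gc a b a b = ∫ ω', (Z b ω' - Z a ω')^2 ∂P := by
      rw [hinc_gc a b a b ha0 hb0 ha0 hb0]
      congr 1
      funext ω'
      ring
    have hGnn : 0 ≤ inc2 gc a b a b := by rw [hGval]; exact hG0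
    have hGM : (∫ ω', (Z b ω' - Z a ω')^2 ∂P) ≤ M := by
      have hGK : ENNReal.ofReal |inc2 gc a b a b| ≤ K := le_Vinf ha' hb' ha' hb' hab hab
      rw [hKM] at hGK
      have := (ENNReal.ofReal_le_ofReal_iff hM0).mp hGK
      rw [abs_of_nonneg hGnn, hGval] at this
      exact this
    have hHval : (∫ ω', (X d ω' - X c ω')^2 ∂P)
        = ∫ ω', (X d ω' - X c ω') * (X d ω' - X c ω') ∂P := by
      congr 1
      funext ω'
      ring
    have hHω : (∫ ω', (X d ω' - X c ω')^2 ∂P) ^ ρ ≤ ω c d c d := by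
      have hHcov := hcov X X (Or.inl rfl) (Or.inl rfl) c d c d hc0 hd0 hc0 hd0 hcd hcd
      rw [← hHval, abs_of_nonneg hH0] at hHcov
      exact hHcov
    have hωcd : ω c d c d ≤ ω s t s t :=
      omega_mono hω hs ht hst hc'.1 hcd hd'.2 hc'.1 hcd hd'.2
    have hHle : (∫ ω', (X d ω' - X c ω')^2 ∂P) ≤ (ω s t s t) ^ (1/ρ) :=
      rpow_inv_le hρ0 hH0 (le_trans hHω hωcd)
    have hB : |inc2 f a b c d| ≤ (M * (ω s t s t) ^ (1/ρ)) ^ (1/2:ℝ) := by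
      refine le_trans hCS ?_
      rw [Real.mul_rpow hM0 (Real.rpow_nonneg hWst0 _)]
      exact mul_le_mul (Real.rpow_le_rpow hG0 hGM (by norm_num))
        (Real.rpow_le_rpow hH0 hHle (by norm_num))
        (Real.rpow_nonneg hH0 _) (Real.rpow_nonneg hM0 _)
    rcases eq_or_lt_of_le (abs_nonneg (inc2 f a b c d)) with h0 | hpos
    · rw [← h0, Real.zero_rpow hγne]
      exact mul_nonneg (hω.2.1 _ _ _ _) hC0
    · have hγeq : ρ + (γ - ρ) = γ := by ring
      rw [← hγeq, Real.rpow_add hpos]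
      have h2 : |inc2 f a b c d| ^ (γ - ρ) ≤ C := by
        rw [hC]
        have step : |inc2 f a b c d| ^ (γ-ρ)
            ≤ ((M * (ω s t s t)^(1/ρ)) ^ (1/2:ℝ)) ^ (γ-ρ) :=
          Real.rpow_le_rpow (abs_nonneg _) hB hγρ
        refine le_trans step (le_of_eq ?_)
        rw [← Real.rpow_mul hMW0]
        congr 1
        ring
      exact mul_le_mul hρbound h2 (Real.rpow_nonneg (abs_nonneg _) _) (hω.2.1 _ _ _ _)
  -- degenerate cases
  rcases eq_or_lt_of_le hστ with rfl | hστlt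
  · rw [V2]
    refine iSup_le fun D => iSup_le fun E => ?_
    have hzero : ∀ i : Fin D.n, ∀ j : Fin E.n,
        (ENNReal.ofReal |inc2 f (D.pts i.castSucc) (D.pts i.succ)
          (E.pts j.castSucc) (E.pts j.succ)|) ^ γ = 0 := by
      intro i j
      have hpa : D.pts i.castSucc = σ :=
        le_antisymm (D.pts_mem_Icc i.castSucc).2 (D.pts_mem_Icc i.castSucc).1
      have hpb : D.pts i.succ = σ :=
        le_antisymm (D.pts_mem_Icc i.succ).2 (D.pts_mem_Icc i.succ).1
      have hz : inc2 f (D.pts i.castSucc) (D.pts i.succ) (E.pts j.castSucc) (E.pts j.succ)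
          = 0 := by
        rw [hpa, hpb, inc2]
        ring
      rw [hz, abs_zero, ENNReal.ofReal_zero]
      exact ENNReal.zero_rpow_of_pos hγ0
    have hsz : (∑ i : Fin D.n, ∑ j : Fin E.n,
        (ENNReal.ofReal |inc2 f (D.pts i.castSucc) (D.pts i.succ)
          (E.pts j.castSucc) (E.pts j.succ)|) ^ γ) = 0 :=
      Finset.sum_eq_zero fun i _ => Finset.sum_eq_zero fun j _ => hzero i j
    rw [hsz, ENNReal.zero_rpow_of_pos (one_div_pos.mpr hγ0)]
    exact zero_le
  rcases eq_or_lt_of_le hστ' with rfl | hστlt'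
  · rw [V2]
    refine iSup_le fun D => iSup_le fun E => ?_
    have hzero : ∀ i : Fin D.n, ∀ j : Fin E.n,
        (ENNReal.ofReal |inc2 f (D.pts i.castSucc) (D.pts i.succ)
          (E.pts j.castSucc) (E.pts j.succ)|) ^ γ = 0 := by
      intro i j
      have hpa : E.pts j.castSucc = σ' :=
        le_antisymm (E.pts_mem_Icc j.castSucc).2 (E.pts_mem_Icc j.castSucc).1
      have hpb : E.pts j.succ = σ' :=
        le_antisymm (E.pts_mem_Icc j.succ).2 (E.pts_mem_Icc j.succ).1
      have hz : inc2 f (D.pts i.castSucc) (D.pts i.succ) (E.pts j.castSucc) (E.pts j.succ)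
          = 0 := by
        rw [hpa, hpb, inc2]
        ring
      rw [hz, abs_zero, ENNReal.ofReal_zero]
      exact ENNReal.zero_rpow_of_pos hγ0
    have hsz : (∑ i : Fin D.n, ∑ j : Fin E.n,
        (ENNReal.ofReal |inc2 f (D.pts i.castSucc) (D.pts i.succ)
          (E.pts j.castSucc) (E.pts j.succ)|) ^ γ) = 0 :=
      Finset.sum_eq_zero fun i _ => Finset.sum_eq_zero fun j _ => hzero i j
    rw [hsz, ENNReal.zero_rpow_of_pos (one_div_pos.mpr hγ0)]
    exact zero_le
  -- main case
  have hWστ0 : 0 ≤ ω σ τ σ' τ' := hω.2.1 σ τ σ' τ'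
  have he1 : (0:ℝ) ≤ (1 - ρ/γ)/2 := by
    have : ρ/γ ≤ 1 := (div_le_one hγ0).mpr (le_of_lt hργ)
    linarith
  have hRHS : K ^ ((1 - ρ/γ)/2) * ENNReal.ofReal ((ω s t s t) ^ ((1/ρ - 1/γ)/2))
      * ENNReal.ofReal ((ω σ τ σ' τ') ^ (1/γ))
      = ENNReal.ofReal (M ^ ((1 - ρ/γ)/2) * (ω s t s t) ^ ((1/ρ - 1/γ)/2)
          * (ω σ τ σ' τ') ^ (1/γ)) := by
    rw [hKM, ENNReal.ofReal_rpow_of_nonneg hM0 he1,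
      ← ENNReal.ofReal_mul (Real.rpow_nonneg hM0 _),
      ← ENNReal.ofReal_mul (mul_nonneg (Real.rpow_nonneg hM0 _) (Real.rpow_nonneg hWst0 _))]
  rw [V2, hRHS]
  refine iSup_le fun D => iSup_le fun E => ?_
  have habpts : ∀ i : Fin D.n, D.pts i.castSucc ≤ D.pts i.succ :=
    fun i => D.mono (Fin.castSucc_le_succ i)
  have hcdpts : ∀ j : Fin E.n, E.pts j.castSucc ≤ E.pts j.succ :=
    fun j => E.mono (Fin.castSucc_le_succ j)
  have hrealsum : (∑ i : Fin D.n, ∑ j : Fin E.n,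
      |inc2 f (D.pts i.castSucc) (D.pts i.succ) (E.pts j.castSucc) (E.pts j.succ)| ^ γ)
      ≤ ω σ τ σ' τ' * C := by
    have hstep1 : (∑ i : Fin D.n, ∑ j : Fin E.n,
        |inc2 f (D.pts i.castSucc) (D.pts i.succ) (E.pts j.castSucc) (E.pts j.succ)| ^ γ)
        ≤ ∑ i : Fin D.n, ∑ j : Fin E.n,
          ω (D.pts i.castSucc) (D.pts i.succ) (E.pts j.castSucc) (E.pts j.succ) * C := by
      refine Finset.sum_le_sum fun i _ => Finset.sum_le_sum fun j _ => ?_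
      exact hcell _ _ _ _ (D.pts_mem_Icc i.castSucc) (D.pts_mem_Icc i.succ)
        (E.pts_mem_Icc j.castSucc) (E.pts_mem_Icc j.succ) (habpts i) (hcdpts j)
    refine le_trans hstep1 ?_
    have hfact : (∑ i : Fin D.n, ∑ j : Fin E.n,
        ω (D.pts i.castSucc) (D.pts i.succ) (E.pts j.castSucc) (E.pts j.succ) * C)
        = (∑ i : Fin D.n, ∑ j : Fin E.n,
          ω (D.pts i.castSucc) (D.pts i.succ) (E.pts j.castSucc) (E.pts j.succ)) * C := by
      rw [Finset.sum_mul]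
      refine Finset.sum_congr rfl fun i _ => ?_
      rw [Finset.sum_mul]
    rw [hfact]
    refine mul_le_mul_of_nonneg_right ?_ hC0
    exact sum_cells_le hω (le_trans hs h1.1) (le_trans h2.2 ht)
      (le_trans hs h3.1) (le_trans h4.2 ht) hστlt hστlt' D E
  have hsum_oR : (∑ i : Fin D.n, ∑ j : Fin E.n,
      (ENNReal.ofReal |inc2 f (D.pts i.castSucc) (D.pts i.succ)
        (E.pts j.castSucc) (E.pts j.succ)|) ^ γ)
      = ENNReal.ofReal (∑ i : Fin D.n, ∑ j : Fin E.n,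
        |inc2 f (D.pts i.castSucc) (D.pts i.succ) (E.pts j.castSucc) (E.pts j.succ)| ^ γ) := by
    rw [ENNReal.ofReal_sum_of_nonneg
      (fun i _ => Finset.sum_nonneg fun j _ => Real.rpow_nonneg (abs_nonneg _) _)]
    refine Finset.sum_congr rfl fun i _ => ?_
    rw [ENNReal.ofReal_sum_of_nonneg (fun j _ => Real.rpow_nonneg (abs_nonneg _) _)]
    refine Finset.sum_congr rfl fun j _ => ?_
    rw [ENNReal.ofReal_rpow_of_nonneg (abs_nonneg _) (le_of_lt hγ0)]
  have hrealeq : ((ω σ τ σ' τ') * C) ^ (1/γ) = M ^ ((1 - ρ/γ)/2)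
      * (ω s t s t) ^ ((1/ρ - 1/γ)/2) * (ω σ τ σ' τ') ^ (1/γ) := by
    rw [hC, Real.mul_rpow hWστ0 (Real.rpow_nonneg hMW0 _), ← Real.rpow_mul hMW0,
      Real.mul_rpow hM0 (Real.rpow_nonneg hWst0 _), ← Real.rpow_mul hWst0]
    have he2 : (γ - ρ)/2 * (1/γ) = (1 - ρ/γ)/2 := by
      field_simp
      try ring
      try tauto
    have he3 : 1/ρ * ((γ - ρ)/2 * (1/γ)) = (1/ρ - 1/γ)/2 := by
      field_simp
      try ring
      try tauto
    rw [he3, he2]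
    ring
  calc (∑ i : Fin D.n, ∑ j : Fin E.n,
      (ENNReal.ofReal |inc2 f (D.pts i.castSucc) (D.pts i.succ)
        (E.pts j.castSucc) (E.pts j.succ)|) ^ γ) ^ (1/γ)
      = (ENNReal.ofReal (∑ i : Fin D.n, ∑ j : Fin E.n,
          |inc2 f (D.pts i.castSucc) (D.pts i.succ) (E.pts j.castSucc)
            (E.pts j.succ)| ^ γ)) ^ (1/γ) := by rw [hsum_oR]
    _ ≤ (ENNReal.ofReal (ω σ τ σ' τ' * C)) ^ (1/γ) :=
        ENNReal.rpow_le_rpow (ENNReal.ofReal_le_ofReal hrealsum)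
          (le_of_lt (one_div_pos.mpr hγ0))
    _ = ENNReal.ofReal ((ω σ τ σ' τ' * C) ^ (1/γ)) :=
        ENNReal.ofReal_rpow_of_nonneg (mul_nonneg hWστ0 hC0) (le_of_lt (one_div_pos.mpr hγ0))
    _ ≤ ENNReal.ofReal (M ^ ((1 - ρ/γ)/2) * (ω s t s t) ^ ((1/ρ - 1/γ)/2)
          * (ω σ τ σ' τ') ^ (1/γ)) := ENNReal.ofReal_le_ofReal (le_of_eq hrealeq)


end
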